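/- Let Λ_0 = I (the d×d identity) and φ_1, ..., φ_t ∈ ℝ^d with ‖φ_τ‖ ≤ 1 for all τ, and Λ_t = I + ∑_{τ=1}^t φ_τ φ_τ^⊤. Then ∑_{τ=1}^t min{1, φ_τ^⊤ Λ_{τ-1}^{-1} φ_τ} ≤ 2 log(det Λ_t / det Λ_0) ≤ 2d log((d+t)/d). -/

import Mathlib

open Matrix

private lemma psd_vmv {d : ℕ} (v : Fin d → ℝ) : (vecMulVec v v).PosSemidef := by
  rw [vecMulVec_eq (ι := Unit)]
  have h := posSemidef_self_mul_conjTranspose (replicateCol Unit v)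
  simpa using h

private lemma min_le_two_log {x : ℝ} (hx : 0 ≤ x) : min 1 x ≤ 2 * Real.log (1 + x) := by
  rcases le_total x 1 with h | h
  · rw [min_eq_right h]
    have h2 : (0:ℝ) < 1 - x/2 := by linarith
    have hexp : Real.exp (x/2) ≤ (1 - x/2)⁻¹ := by
      rw [le_inv_comm₀ (Real.exp_pos _) h2]
      calc (1 - x/2) = -(x/2) + 1 := by ring
      _ ≤ Real.exp (-(x/2)) := Real.add_one_le_exp _
      _ = (Real.exp (x/2))⁻¹ := by rw [← Real.exp_neg]
    have hle : (1 - x/2)⁻¹ ≤ 1 + x := by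
      rw [inv_le_iff_one_le_mul₀ h2]; nlinarith
    have : x/2 ≤ Real.log (1+x) := by
      rw [Real.le_log_iff_exp_le (by linarith)]; linarith
    linarith
  · rw [min_eq_left h]
    have : Real.exp (1/2) ≤ 2 := by
      nlinarith [Real.exp_one_lt_d9, Real.exp_pos (1/2:ℝ), Real.exp_add (1/2:ℝ) (1/2),
        Real.exp_one_gt_d9]
    have h2 : (1:ℝ)/2 ≤ Real.log 2 := by
      rw [Real.le_log_iff_exp_le (by norm_num)]; exact this
    have : Real.log 2 ≤ Real.log (1+x) := Real.log_le_log (by norm_num) (by linarith)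
    linarith

private lemma trace_eq_sum_eig {d : ℕ} {A : Matrix (Fin d) (Fin d) ℝ} (hA : A.IsHermitian) :
    A.trace = ∑ i, hA.eigenvalues i := by
  rw [hA.trace_eq_sum_eigenvalues]
  simp

private lemma det_le_pow {d : ℕ} (hd : 0 < d) {A : Matrix (Fin d) (Fin d) ℝ}
    (hA : A.PosSemidef) : A.det ≤ (A.trace / d) ^ d := by
  have hev := hA.eigenvalues_nonneg
  have hd' : (d:ℝ) ≠ 0 := Nat.cast_ne_zero.mpr hd.ne'
  have hgm := Real.geom_mean_le_arith_mean_weighted Finset.univ (fun _ => (d:ℝ)⁻¹)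
    hA.1.eigenvalues (fun i _ => by positivity)
    (by simp [Finset.card_univ, hd']) (fun i _ => hev i)
  have hdet : A.det = ∏ i, hA.1.eigenvalues i := by
    simpa using hA.1.det_eq_prod_eigenvalues
  have htr : A.trace / d = ∑ i, (d:ℝ)⁻¹ * hA.1.eigenvalues i := by
    rw [trace_eq_sum_eig hA.1, ← Finset.mul_sum, div_eq_inv_mul]
  rw [hdet, htr]
  calc (∏ i, hA.1.eigenvalues i)
      = (∏ i, hA.1.eigenvalues i ^ ((d:ℝ)⁻¹)) ^ d := by
        rw [← Finset.prod_pow]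
        refine Finset.prod_congr rfl fun i _ => ?_
        rw [← Real.rpow_natCast (hA.1.eigenvalues i ^ ((d:ℝ)⁻¹)), ← Real.rpow_mul (hev i),
          inv_mul_cancel₀ hd', Real.rpow_one]
    _ ≤ (∑ i, (d:ℝ)⁻¹ * hA.1.eigenvalues i) ^ d :=
        pow_le_pow_left₀ (Finset.prod_nonneg fun i _ => Real.rpow_nonneg (hev i) _) hgm d

theorem elliptical_potential (d t : ℕ) (hd : 0 < d) (φ : ℕ → (Fin d → ℝ))
    (hφ : ∀ τ, Real.sqrt (∑ i, φ τ i ^ 2) ≤ 1)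
    (Λ : ℕ → Matrix (Fin d) (Fin d) ℝ)
    (hΛ : ∀ s, Λ s = 1 + ∑ τ ∈ Finset.range s, Matrix.vecMulVec (φ τ) (φ τ)) :
    ∑ τ ∈ Finset.range t, min 1 (φ τ ⬝ᵥ ((Λ τ)⁻¹ *ᵥ φ τ)) ≤
      2 * Real.log ((Λ t).det / (Λ 0).det) ∧
    2 * Real.log ((Λ t).det / (Λ 0).det) ≤ 2 * d * Real.log ((d + t) / d) := by
  set x : ℕ → ℝ := fun τ => φ τ ⬝ᵥ ((Λ τ)⁻¹ *ᵥ φ τ) with hxdef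
  -- positivity facts
  have hpsdsum : ∀ s, (∑ τ ∈ Finset.range s, vecMulVec (φ τ) (φ τ)).PosSemidef := by
    intro s
    induction s with
    | zero => simpa using Matrix.PosSemidef.zero
    | succ n ih => rw [Finset.sum_range_succ]; exact ih.add (psd_vmv (φ n))
  have hpos : ∀ s, (Λ s).PosDef := fun s => by
    rw [hΛ s]; exact Matrix.PosDef.add_posSemidef Matrix.PosDef.one (hpsdsum s)
  have hx0 : ∀ τ, 0 ≤ x τ := fun τ => by
    have := ((hpos τ).inv).posSemidef.dotProduct_mulVec_nonneg (φ τ)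
    simpa [hxdef] using this
  have hdet0 : (Λ 0).det = 1 := by rw [hΛ 0]; simp
  -- determinant recurrence
  have hdetstep : ∀ τ, (Λ (τ+1)).det = (Λ τ).det * (1 + x τ) := by
    intro τ
    have h1 : Λ (τ+1) = Λ τ + replicateCol Unit (φ τ) * replicateRow Unit (φ τ) := by
      rw [hΛ, hΛ, Finset.sum_range_succ, ← add_assoc, vecMulVec_eq (ι := Unit)]
    rw [h1, det_add_replicateCol_mul_replicateRow (isUnit_iff_ne_zero.mpr (hpos τ).det_pos.ne')]
    congr 1
    rw [det_unique]
    simp only [Matrix.add_apply, Matrix.one_apply_eq, Matrix.mul_apply, dotProduct, mulVec,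
      replicateRow_apply, replicateCol_apply, Finset.sum_mul, Finset.mul_sum, hxdef]
    rw [Finset.sum_comm]
    ring_nf
  -- telescoping log identity
  have hlog : ∀ s, Real.log (Λ s).det = ∑ τ ∈ Finset.range s, Real.log (1 + x τ) := by
    intro s
    induction s with
    | zero => rw [hdet0, Real.log_one, Finset.sum_range_zero]
    | succ n ih =>
      rw [Finset.sum_range_succ, ← ih, hdetstep n,
        Real.log_mul (hpos n).det_pos.ne' (by have := hx0 n; positivity)]
  constructor
  · rw [hdet0, div_one, hlog t, Finset.mul_sum]
    exact Finset.sum_le_sum fun τ _ => min_le_two_log (hx0 τ)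
  · rw [hdet0, div_one]
    -- trace bound
    have htrv : ∀ τ, (vecMulVec (φ τ) (φ τ)).trace ≤ 1 := by
      intro τ
      have h1 : (vecMulVec (φ τ) (φ τ)).trace = ∑ i, φ τ i ^ 2 := by
        simp [Matrix.trace, Matrix.diag, vecMulVec_apply, sq]
      have hs : (0:ℝ) ≤ ∑ i, φ τ i ^ 2 := Finset.sum_nonneg fun i _ => sq_nonneg _
      have := hφ τ
      rw [h1, ← Real.sq_sqrt hs]
      nlinarith [Real.sqrt_nonneg (∑ i, φ τ i ^ 2)]
    have htr : (Λ t).trace ≤ d + t := by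
      rw [hΛ t]
      rw [Matrix.trace_add, Matrix.trace_one, Matrix.trace_sum]
      have : ∑ τ ∈ Finset.range t, (vecMulVec (φ τ) (φ τ)).trace ≤ ∑ τ ∈ Finset.range t, 1 :=
        Finset.sum_le_sum fun τ _ => htrv τ
      simp only [Finset.sum_const, Finset.card_range, smul_eq_mul, mul_one] at this
      simpa using add_le_add_left this (d:ℝ)
    have hd' : (0:ℝ) < d := Nat.cast_pos.mpr hd
    have htrnn : 0 ≤ (Λ t).trace / d := by
      have : (0:ℝ) ≤ (Λ t).trace := by
        rw [trace_eq_sum_eig (hpos t).isHermitian]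
        exact Finset.sum_nonneg fun i _ => ((hpos t).posSemidef.eigenvalues_nonneg i)
      positivity
    have hdetle : (Λ t).det ≤ (((d:ℝ) + t) / d) ^ d := by
      calc (Λ t).det ≤ ((Λ t).trace / d) ^ d := det_le_pow hd (hpos t).posSemidef
        _ ≤ (((d:ℝ) + t) / d) ^ d :=
          pow_le_pow_left₀ htrnn (by gcongr) d
    have hloglog : Real.log (Λ t).det ≤ (d:ℝ) * Real.log (((d:ℝ) + t) / d) := by
      calc Real.log (Λ t).det ≤ Real.log ((((d:ℝ) + t) / d) ^ d) :=
            Real.log_le_log (hpos t).det_pos hdetle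
        _ = (d:ℝ) * Real.log (((d:ℝ) + t) / d) := by rw [Real.log_pow]
    linarith
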